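/- Every finitely presented group admits a convenient presentation. Precisely: for every finite type α and every finite subset R of the free group on α, there exist a finite type β, a finite subset S of the free group on β, and a map ι : β → β such that (i) every element of S has the form (FreeGroup.of a) * (FreeGroup.of b) * (FreeGroup.of c)⁻¹ for some a, b, c : β, (ii) for every b : β the image of FreeGroup.of (ι b) in the presented group PresentedGroup S equals the inverse of the image of FreeGroup.of b, and (iii) PresentedGroup R and PresentedGroup S are isomorphic as groups. -/

import Mathlib

namespace ConvAux

instance {γ : Type*} [Finite γ] : Finite (Option γ) :=
  Finite.of_equiv _ (Equiv.optionEquivSumPUnit.{0} γ).symm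

variable {α : Type} [DecidableEq α] (R : Set (FreeGroup α))

/-- Base symbols: original generators, plus one symbol for each prefix of each relator. -/
abbrev Base : Type := α ⊕ (Σ r : R, Fin (r : FreeGroup α).toWord.length)

/-- New generators: a dummy generator `none` (forced to be `1`), and each base symbol
together with a `Bool` (the `false` version is a formal inverse of the `true` one). -/
abbrev B : Type := Option (Base R × Bool)

/-- The inverse-witnessing involution. -/
def iota : B R → B R := Option.map fun p => (p.1, !p.2)

/-- Index of relators. -/
abbrev Idx : Type :=
  Unit ⊕ (Base R ⊕ ((Σ r : R, Fin (r : FreeGroup α).toWord.length) ⊕ R))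

/-- The positive generator associated to a base symbol. -/
def pos (g : Base R) : FreeGroup (B R) := FreeGroup.of (some (g, true))

/-- The relators. -/
def rel : Idx R → FreeGroup (B R)
  | Sum.inl _ => FreeGroup.of none * FreeGroup.of none * (FreeGroup.of none)⁻¹
  | Sum.inr (Sum.inl g) =>
      FreeGroup.of (some (g, true)) * FreeGroup.of (some (g, false)) * (FreeGroup.of none)⁻¹
  | Sum.inr (Sum.inr (Sum.inl ⟨r, i⟩)) =>
      (if h : (i : ℕ) = 0 then FreeGroup.of none
        else pos R (Sum.inr ⟨r, ⟨(i : ℕ) - 1, lt_of_le_of_lt (Nat.pred_le _) i.2⟩⟩)) *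
      FreeGroup.of (some (Sum.inl ((r : FreeGroup α).toWord.get i).1,
        ((r : FreeGroup α).toWord.get i).2)) *
      (pos R (Sum.inr ⟨r, i⟩))⁻¹
  | Sum.inr (Sum.inr (Sum.inr r)) =>
      if h : 0 < (r : FreeGroup α).toWord.length then
        pos R (Sum.inr ⟨r, ⟨(r : FreeGroup α).toWord.length - 1, by omega⟩⟩) *
        pos R (Sum.inr ⟨r, ⟨(r : FreeGroup α).toWord.length - 1, by omega⟩⟩) *
        (pos R (Sum.inr ⟨r, ⟨(r : FreeGroup α).toWord.length - 1, by omega⟩⟩))⁻¹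
      else FreeGroup.of none * FreeGroup.of none * (FreeGroup.of none)⁻¹

/-- The convenient relator set. -/
def S : Set (FreeGroup (B R)) := Set.range (rel R)

lemma rel_mem (i : Idx R) : rel R i ∈ S R := ⟨i, rfl⟩

lemma mk_rel_eq_one (i : Idx R) : PresentedGroup.mk (S R) (rel R i) = 1 :=
  (QuotientGroup.eq_one_iff _).2 (Subgroup.subset_normalClosure (rel_mem R i))

lemma of_none_eq_one : (PresentedGroup.of none : PresentedGroup (S R)) = 1 := by
  have h := mk_rel_eq_one R (Sum.inl ())
  simp only [rel, map_mul, map_inv] at h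
  simpa [mul_inv_cancel_right, PresentedGroup.of] using h

lemma of_false_eq_inv (g : Base R) :
    (PresentedGroup.of (some (g, false)) : PresentedGroup (S R))
      = (PresentedGroup.of (some (g, true)))⁻¹ := by
  have h := mk_rel_eq_one R (Sum.inr (Sum.inl g))
  simp only [rel, map_mul, map_inv] at h
  have hnone : (PresentedGroup.mk (S R) (FreeGroup.of none)) = 1 := of_none_eq_one R
  rw [hnone, inv_one, mul_one] at h
  exact (inv_eq_of_mul_eq_one_right h).symm


lemma chain_zero (r : R) (i : Fin (r : FreeGroup α).toWord.length) (h0 : (i : ℕ) = 0) :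
    (PresentedGroup.of (some (Sum.inl ((r : FreeGroup α).toWord.get i).1,
        ((r : FreeGroup α).toWord.get i).2)) : PresentedGroup (S R))
      = PresentedGroup.of (some (Sum.inr ⟨r, i⟩, true)) := by
  have h := mk_rel_eq_one R (Sum.inr (Sum.inr (Sum.inl ⟨r, i⟩)))
  rw [rel, dif_pos h0] at h
  simp only [pos, map_mul, map_inv] at h
  have hnone : (PresentedGroup.mk (S R)) (FreeGroup.of (none : B R)) = 1 := of_none_eq_one R
  rw [hnone, one_mul, mul_inv_eq_one] at h
  exact h

lemma chain_succ (r : R) (i : Fin (r : FreeGroup α).toWord.length) (h0 : ¬ (i : ℕ) = 0) :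
    (PresentedGroup.of (some (Sum.inr ⟨r, ⟨(i : ℕ) - 1,
        lt_of_le_of_lt (Nat.pred_le _) i.2⟩⟩, true)) : PresentedGroup (S R)) *
      PresentedGroup.of (some (Sum.inl ((r : FreeGroup α).toWord.get i).1,
        ((r : FreeGroup α).toWord.get i).2))
      = PresentedGroup.of (some (Sum.inr ⟨r, i⟩, true)) := by
  have h := mk_rel_eq_one R (Sum.inr (Sum.inr (Sum.inl ⟨r, i⟩)))
  rw [rel, dif_neg h0] at h
  simp only [pos, map_mul, map_inv] at h
  rw [mul_inv_eq_one] at h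
  exact h

lemma kill_eq (r : R) (h : 0 < (r : FreeGroup α).toWord.length) :
    (PresentedGroup.of (some (Sum.inr ⟨r, ⟨(r : FreeGroup α).toWord.length - 1,
        by omega⟩⟩, true)) : PresentedGroup (S R)) = 1 := by
  have hh := mk_rel_eq_one R (Sum.inr (Sum.inr (Sum.inr r)))
  rw [rel, dif_pos h] at hh
  simp only [pos, map_mul, map_inv, mul_inv_cancel_right] at hh
  exact hh

/-- The map on original generators. -/
def f0 : α → PresentedGroup (S R) := fun a => PresentedGroup.of (some (Sum.inl a, true))

lemma lift_single (y : α × Bool) :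
    FreeGroup.lift (f0 R) (FreeGroup.mk [y])
      = PresentedGroup.of (some (Sum.inl y.1, y.2)) := by
  rcases y with ⟨a, b⟩
  cases b
  · rw [of_false_eq_inv R (Sum.inl a)]
    simp [FreeGroup.lift_mk, f0]
  · simp [FreeGroup.lift_mk, f0]

lemma prefix_eq (r : R) : ∀ k, ∀ hk : k ≤ (r : FreeGroup α).toWord.length,
    FreeGroup.lift (f0 R) (FreeGroup.mk ((r : FreeGroup α).toWord.take k))
      = if h : k = 0 then (1 : PresentedGroup (S R))
        else PresentedGroup.of (some (Sum.inr ⟨r, ⟨k - 1, by omega⟩⟩, true)) := by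
  intro k
  induction k with
  | zero => intro _; simp [FreeGroup.lift_mk]
  | succ k ih =>
    intro hk
    have hk' : k < (r : FreeGroup α).toWord.length := hk
    rw [← List.take_concat_get' _ k hk', ← FreeGroup.mul_mk, map_mul, ih (le_of_lt hk'),
      lift_single, dif_neg (Nat.succ_ne_zero k)]
    rcases Nat.eq_zero_or_pos k with h0 | h0
    · subst h0
      rw [dif_pos rfl, one_mul]
      have := chain_zero R r ⟨0, hk'⟩ rfl
      simpa [List.get_eq_getElem] using this
    · rw [dif_neg (by omega)]
      have := chain_succ R r ⟨k, hk'⟩ (by simp; omega)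
      simpa [List.get_eq_getElem] using this

lemma lift_rel_one : ∀ r ∈ R, FreeGroup.lift (f0 R) r = 1 := by
  intro r hr
  have h1 : FreeGroup.mk ((((⟨r, hr⟩ : R) : FreeGroup α)).toWord.take
      ((((⟨r, hr⟩ : R) : FreeGroup α)).toWord.length)) = r := by
    rw [List.take_length, FreeGroup.mk_toWord]
  rw [← h1, prefix_eq R ⟨r, hr⟩ _ le_rfl]
  split
  · rfl
  · exact kill_eq R ⟨r, hr⟩ (by omega)

/-- The forward homomorphism. -/
def fHom : PresentedGroup R →* PresentedGroup (S R) :=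
  PresentedGroup.toGroup (lift_rel_one R)

lemma fHom_mk (x : FreeGroup α) :
    fHom R (PresentedGroup.mk R x) = FreeGroup.lift (f0 R) x := rfl

/-- The value of the inverse map on positive base symbols. -/
def g1 : Base R → PresentedGroup R
  | Sum.inl a => PresentedGroup.of a
  | Sum.inr ⟨r, i⟩ =>
      PresentedGroup.mk R (FreeGroup.mk ((r : FreeGroup α).toWord.take ((i : ℕ) + 1)))

/-- The map on new generators. -/
def g0 : B R → PresentedGroup R
  | none => 1
  | some (g, b) => cond b (g1 R g) (g1 R g)⁻¹

set_option linter.unusedSectionVars false in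
lemma mk_single (y : α × Bool) :
    PresentedGroup.mk R (FreeGroup.mk [y])
      = cond y.2 (PresentedGroup.of y.1) (PresentedGroup.of y.1)⁻¹ := by
  rcases y with ⟨a, b⟩
  cases b
  · have : FreeGroup.mk [(a, false)] = (FreeGroup.of a)⁻¹ := by
      show FreeGroup.mk [(a, false)] = (FreeGroup.mk [(a, true)])⁻¹
      rw [FreeGroup.inv_mk]
      simp [FreeGroup.invRev]
    rw [this, map_inv]
    rfl
  · rfl

lemma g_rel_one : ∀ s ∈ S R, FreeGroup.lift (g0 R) s = 1 := by
  rintro s ⟨idx, rfl⟩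
  rcases idx with _ | g | ⟨r, i⟩ | r
  · simp [rel, g0]
  · simp [rel, g0]
  · rw [rel]
    obtain ⟨iv, hlt⟩ := i
    have hget : ((r : FreeGroup α).toWord.get ⟨iv, hlt⟩)
        = (r : FreeGroup α).toWord[iv] := by simp [List.get_eq_getElem]
    by_cases h0 : ((⟨iv, hlt⟩ : Fin _) : ℕ) = 0
    · rw [dif_pos h0]
      simp only at h0
      subst h0
      simp only [pos, map_mul, map_inv, FreeGroup.lift_apply_of, g0, g1]
      rw [mul_inv_eq_one]
      have : (0 : ℕ) + 1 = 0 + 1 := rfl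
      have htake : (r : FreeGroup α).toWord.take (0 + 1)
          = [(r : FreeGroup α).toWord[0]] := by
        rw [← List.take_concat_get' _ 0 hlt]
        simp
      rw [htake, mk_single, hget]
      rcases (r : FreeGroup α).toWord[0] with ⟨a, b⟩
      cases b <;> simp [g0, g1]
    · rw [dif_neg h0]
      simp only at h0
      simp only [pos, map_mul, map_inv, FreeGroup.lift_apply_of, g0, g1]
      rw [mul_inv_eq_one]
      have h1 : iv - 1 + 1 = iv := by omega
      rw [h1]
      have h2 : (r : FreeGroup α).toWord.take (iv + 1)
          = (r : FreeGroup α).toWord.take iv ++ [(r : FreeGroup α).toWord[iv]] :=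
        (List.take_concat_get' _ iv hlt).symm
      rw [h2, ← FreeGroup.mul_mk, map_mul, mk_single, hget]
      rcases (r : FreeGroup α).toWord[iv] with ⟨a, b⟩
      cases b <;> simp [g0, g1]
  · rw [rel]
    by_cases h : 0 < (r : FreeGroup α).toWord.length
    · rw [dif_pos h]
      simp only [pos, map_mul, map_inv, FreeGroup.lift_apply_of, mul_inv_cancel_right, g0, g1]
      have h1 : (r : FreeGroup α).toWord.length - 1 + 1
          = (r : FreeGroup α).toWord.length := by omega
      rw [h1, List.take_length, FreeGroup.mk_toWord]
      exact (QuotientGroup.eq_one_iff _).2 (Subgroup.subset_normalClosure r.2)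
    · rw [dif_neg h]
      simp [g0]

/-- The inverse homomorphism. -/
def gHom : PresentedGroup (S R) →* PresentedGroup R :=
  PresentedGroup.toGroup (g_rel_one R)


lemma gf_id : (gHom R).comp (fHom R) = MonoidHom.id (PresentedGroup R) := by
  apply PresentedGroup.ext
  intro a
  simp only [MonoidHom.comp_apply, MonoidHom.id_apply, fHom, gHom,
    PresentedGroup.toGroup.of, f0, g0, g1, cond_true]

lemma fHom_of (a : α) :
    fHom R (PresentedGroup.of a) = PresentedGroup.of (some (Sum.inl a, true)) := by
  simp [fHom, PresentedGroup.toGroup.of, f0]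

lemma fg_id : (fHom R).comp (gHom R) = MonoidHom.id (PresentedGroup (S R)) := by
  apply PresentedGroup.ext
  intro b
  simp only [MonoidHom.comp_apply, MonoidHom.id_apply, gHom, PresentedGroup.toGroup.of]
  match b with
  | none =>
      rw [show g0 R none = 1 from rfl, map_one, of_none_eq_one]
  | some (Sum.inl a, true) =>
      rw [show g0 R (some (Sum.inl a, true)) = PresentedGroup.of a from rfl, fHom_of]
  | some (Sum.inl a, false) =>
      rw [show g0 R (some (Sum.inl a, false)) = (PresentedGroup.of a)⁻¹ from rfl,
        map_inv, fHom_of, ← of_false_eq_inv]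
  | some (Sum.inr ⟨r, i⟩, true) =>
      have h1 : g0 R (some (Sum.inr ⟨r, i⟩, true))
          = PresentedGroup.mk R (FreeGroup.mk
              ((r : FreeGroup α).toWord.take ((i : ℕ) + 1))) := rfl
      rw [h1, fHom_mk, prefix_eq R r ((i : ℕ) + 1) i.2, dif_neg (Nat.succ_ne_zero _)]
      congr 1
  | some (Sum.inr ⟨r, i⟩, false) =>
      have h1 : g0 R (some (Sum.inr ⟨r, i⟩, false))
          = (PresentedGroup.mk R (FreeGroup.mk
              ((r : FreeGroup α).toWord.take ((i : ℕ) + 1))))⁻¹ := rfl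
      rw [h1, map_inv, fHom_mk, prefix_eq R r ((i : ℕ) + 1) i.2,
        dif_neg (Nat.succ_ne_zero _), ← of_false_eq_inv]
      congr 2

/-- The isomorphism. -/
noncomputable def equiv : PresentedGroup R ≃* PresentedGroup (S R) :=
  MonoidHom.toMulEquiv (fHom R) (gHom R) (gf_id R) (fg_id R)

end ConvAux

open ConvAux in
/-- Every finitely presented group admits a *convenient* presentation: one whose
generating set is closed under inverses (witnessed by `ι`) and all of whose
relators have the form `a * b * c⁻¹` for single generators `a, b, c`. -/
theorem convenient_presentation_exists
    (α : Type) [Fintype α] (R : Set (FreeGroup α)) (hR : R.Finite) :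
    ∃ (β : Type) (_ : Fintype β) (S : Set (FreeGroup β)) (_ : S.Finite) (ι : β → β),
      (∀ s ∈ S, ∃ a b c : β,
        s = FreeGroup.of a * FreeGroup.of b * (FreeGroup.of c)⁻¹) ∧
      (∀ b : β,
        (PresentedGroup.of (rels := S) (ι b) : PresentedGroup S)
          = (PresentedGroup.of (rels := S) b)⁻¹) ∧
      Nonempty (PresentedGroup R ≃* PresentedGroup S) := by
  classical
  haveI : Finite ↑R := hR.to_subtype
  refine ⟨B R, Fintype.ofFinite _, S R, Set.finite_range _, iota R, ?_, ?_, ⟨equiv R⟩⟩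
  · rintro s ⟨idx, rfl⟩
    rcases idx with _ | g | ⟨r, i⟩ | r
    · exact ⟨none, none, none, rfl⟩
    · exact ⟨some (g, true), some (g, false), none, rfl⟩
    · rw [rel]
      split_ifs with h
      · exact ⟨none, _, _, rfl⟩
      · exact ⟨_, _, _, rfl⟩
    · rw [rel]
      split_ifs with h
      · exact ⟨_, _, _, rfl⟩
      · exact ⟨none, none, none, rfl⟩
  · intro b
    match b with
    | none =>
        show (PresentedGroup.of none : PresentedGroup (S R)) = (PresentedGroup.of none)⁻¹
        rw [of_none_eq_one, inv_one]
    | some (g, true) =>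
        show (PresentedGroup.of (some (g, false)) : PresentedGroup (S R))
          = (PresentedGroup.of (some (g, true)))⁻¹
        exact of_false_eq_inv R g
    | some (g, false) =>
        show (PresentedGroup.of (some (g, true)) : PresentedGroup (S R))
          = (PresentedGroup.of (some (g, false)))⁻¹
        rw [of_false_eq_inv, inv_inv]
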